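/- Let M ≠ 0, Λ ∈ ℝ, and let ℓ ≥ 2 be an integer. With μ = (ℓ−1)(ℓ+2), w = (ℓ−1)ℓ(ℓ+1)(ℓ+2)/(12M), f(r) = 1 − 2M/r − Λr²/3, and W(r) = w + 6M f(r)/(r(μr + 6M)), one has, for all r > 0 with μr + 6M ≠ 0: −f(r)·W'(r) + W(r)² − w² = f(r)·(ℓ(ℓ+1)/r² − 6M/r³). -/

import Mathlib

/-- Chandrasekhar's Riccati identity for the Regge-Wheeler potential:
`-f W' + W² - w² = f (ℓ(ℓ+1)/r² - 6M/r³)`, i.e. the factorization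
`H⁻ + w² = D⁻ D⁺` of the Regge-Wheeler operator, extended to `Λ ≠ 0`. -/
theorem stmt_8 (M Λ : ℝ) (hM : M ≠ 0) (ℓ : ℕ) (hℓ : 2 ≤ ℓ) :
    let μ : ℝ := ((ℓ : ℝ) - 1) * ((ℓ : ℝ) + 2)
    let w : ℝ := ((ℓ : ℝ) - 1) * (ℓ : ℝ) * ((ℓ : ℝ) + 1) * ((ℓ : ℝ) + 2) / (12 * M)
    let f : ℝ → ℝ := fun r => 1 - 2 * M / r - Λ * r ^ 2 / 3
    let W : ℝ → ℝ := fun r => w + 6 * M * f r / (r * (μ * r + 6 * M))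
    ∀ r : ℝ, 0 < r → μ * r + 6 * M ≠ 0 →
      -(f r * deriv W r) + (W r) ^ 2 - w ^ 2
        = f r * ((ℓ : ℝ) * ((ℓ : ℝ) + 1) / r ^ 2 - 6 * M / r ^ 3) := by
  intro μ w f W r hr hd
  have hr0 : r ≠ 0 := ne_of_gt hr
  have hden : r * (μ * r + 6 * M) ≠ 0 := mul_ne_zero hr0 hd
  have hinv : HasDerivAt (fun x : ℝ => x⁻¹) (-(r ^ 2)⁻¹) r := by
    simpa using hasDerivAt_inv hr0
  have hnum : HasDerivAt (fun x : ℝ => 6 * M * (1 - 2 * M * x⁻¹ - Λ * x ^ 2 / 3))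
      (6 * M * (0 - 2 * M * (-(r ^ 2)⁻¹) - Λ * (2 * r) / 3)) r := by
    have h1 : HasDerivAt (fun x : ℝ => 2 * M * x⁻¹) (2 * M * (-(r ^ 2)⁻¹)) r :=
      hinv.const_mul (2 * M)
    have h2 : HasDerivAt (fun x : ℝ => Λ * x ^ 2 / 3) (Λ * (2 * r) / 3) r := by
      have := (hasDerivAt_pow 2 r).const_mul Λ
      simpa [mul_comm, mul_assoc, mul_left_comm] using this.div_const 3
    exact (((hasDerivAt_const r (1:ℝ)).sub h1).sub h2).const_mul (6 * M)
  have hdenf : HasDerivAt (fun x : ℝ => x * (μ * x + 6 * M))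
      (1 * (μ * r + 6 * M) + r * (μ * 1)) r := by
    exact (hasDerivAt_id' r).mul (((hasDerivAt_id' r).const_mul μ).add_const (6 * M))
  have hW : HasDerivAt W
      ((6 * M * (0 - 2 * M * (-(r ^ 2)⁻¹) - Λ * (2 * r) / 3) * (r * (μ * r + 6 * M))
        - 6 * M * (1 - 2 * M * r⁻¹ - Λ * r ^ 2 / 3) * (1 * (μ * r + 6 * M) + r * (μ * 1)))
        / (r * (μ * r + 6 * M)) ^ 2) r := by
    have := (hnum.div hdenf hden).const_add w
    simpa [W, f, div_eq_mul_inv] using this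
  rw [hW.deriv]
  simp only [W, f, w]
  have h12 : (12 : ℝ) * M ≠ 0 := by positivity <;> simp [hM]
  have hμ : μ = ((ℓ : ℝ) - 1) * ((ℓ : ℝ) + 2) := rfl
  clear_value μ
  have hd2 : r * μ + M * 6 ≠ 0 := by rwa [mul_comm r, mul_comm M]
  field_simp
  subst hμ
  ring
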